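/- The family F of two-sided ideals of a ring R having the right Artin-Rees property satisfies (P2): F is monoidal, and if J ∈ F and I is an ideal with I² ⊆ J ⊆ I, then I ∈ F. Consequently, an ideal maximal with respect to not having the right Artin-Rees property is prime. -/

import Mathlib

variable {R : Type*} [Ring R]

/-- A left ideal `I` is two-sided if it is also closed under right multiplication. -/
def IsTwoSided (I : Ideal R) : Prop := ∀ x ∈ I, ∀ r : R, x * r ∈ I

/-- A two-sided ideal `P` is prime: it is proper, and `AB ⊆ P` implies `A ⊆ P` or
`B ⊆ P` for two-sided ideals `A`, `B`. -/
def IsPrimeTwoSided (P : Ideal R) : Prop :=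
  IsTwoSided P ∧ P ≠ ⊤ ∧
    ∀ A B : Ideal R, IsTwoSided A → IsTwoSided B → A * B ≤ P → A ≤ P ∨ B ≤ P

/-- A (two-sided) ideal `I` has the right Artin-Rees property if for every right
ideal `K` of `R` there is `n ≥ 1` with `K ∩ Iⁿ ⊆ KI`, where `KI` is the additive
subgroup generated by products `k * i`. -/
def HasRightAR (I : Ideal R) : Prop :=
  ∀ K : Submodule Rᵐᵒᵖ R, ∃ n : ℕ, 0 < n ∧
    (K : Set R) ∩ (I ^ n : Ideal R) ⊆
      (AddSubgroup.closure {z : R | ∃ k ∈ K, ∃ i ∈ I, z = k * i} : Set R)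

namespace ARaux

/-- The set of products `k * i`. -/
def prodSet (K : Submodule Rᵐᵒᵖ R) (I : Ideal R) : Set R :=
  {z : R | ∃ k ∈ K, ∃ i ∈ I, z = k * i}

lemma prodSet_mono {K : Submodule Rᵐᵒᵖ R} {I J : Ideal R} (h : I ≤ J) :
    prodSet K I ⊆ prodSet K J := by
  rintro z ⟨k, hk, i, hi, rfl⟩
  exact ⟨k, hk, i, h hi, rfl⟩

/-- If `I` is two-sided, the additive closure of `prodSet K I` is a right ideal. -/
def rightSub (K : Submodule Rᵐᵒᵖ R) (I : Ideal R) (hI : IsTwoSided I) : Submodule Rᵐᵒᵖ R where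
  carrier := (AddSubgroup.closure (prodSet K I) : Set R)
  add_mem' := fun ha hb => AddSubgroup.add_mem _ ha hb
  zero_mem' := AddSubgroup.zero_mem _
  smul_mem' := by
    intro c x hx
    show x * c.unop ∈ AddSubgroup.closure (prodSet K I)
    induction hx using AddSubgroup.closure_induction with
    | mem z hz =>
        obtain ⟨k, hk, i, hi, rfl⟩ := hz
        exact AddSubgroup.subset_closure ⟨k, hk, i * c.unop, hI i hi c.unop, mul_assoc _ _ _⟩
    | zero => simpa using AddSubgroup.zero_mem _
    | add a b _ _ ha hb => rw [add_mul]; exact AddSubgroup.add_mem _ ha hb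
    | neg a _ ha => rw [neg_mul]; exact AddSubgroup.neg_mem _ ha

lemma mem_rightSub {K : Submodule Rᵐᵒᵖ R} {I : Ideal R} (hI : IsTwoSided I) {x : R} :
    x ∈ rightSub K I hI ↔ x ∈ AddSubgroup.closure (prodSet K I) := Iff.rfl

lemma pow_mono {I J : Ideal R} (h : I ≤ J) (n : ℕ) : I ^ n ≤ J ^ n := by
  induction n with
  | zero => rw [Submodule.pow_zero, Submodule.pow_zero]
  | succ n ih =>
      rw [Submodule.pow_succ, Submodule.pow_succ]
      exact mul_le_mul' ih h

lemma pow_two_mul_le {I J : Ideal R} (h : I * I ≤ J) (n : ℕ) : I ^ (2 * n) ≤ J ^ n := by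
  induction n with
  | zero => rw [Nat.mul_zero, Submodule.pow_zero, Submodule.pow_zero]
  | succ n ih =>
      have h1 : I ^ (2 * (n + 1)) = I ^ (2 * n) * (I * I) := by
        have : 2 * (n + 1) = 2 * n + 1 + 1 := by ring
        rw [this, Submodule.pow_succ, Submodule.pow_succ, mul_assoc]
      rw [h1, Submodule.pow_succ]
      exact mul_le_mul' ih h

lemma mul_le_left {I J : Ideal R} (hI : IsTwoSided I) : I * J ≤ I :=
  Ideal.mul_le.2 fun r hr s _ => hI r hr s

lemma mul_le_right {I J : Ideal R} : I * J ≤ J :=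
  Ideal.mul_le.2 fun r _ s hs => J.mul_mem_left r hs

lemma mul_isTwoSided {I J : Ideal R} (hJ : IsTwoSided J) : IsTwoSided (I * J) := by
  intro x hx r
  refine Submodule.mul_induction_on hx (fun a ha b hb => ?_) (fun y z hy hz => ?_)
  · rw [mul_assoc]
    exact Submodule.mul_mem_mul ha (hJ b hb r)
  · rw [add_mul]
    exact add_mem hy hz

lemma sup_isTwoSided {I J : Ideal R} (hI : IsTwoSided I) (hJ : IsTwoSided J) :
    IsTwoSided (I ⊔ J) := by
  intro x hx r
  obtain ⟨a, ha, b, hb, rfl⟩ := Submodule.mem_sup.1 hx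
  rw [add_mul]
  exact Submodule.add_mem_sup (hI a ha r) (hJ b hb r)

lemma top_hasRightAR : HasRightAR (⊤ : Ideal R) := by
  intro K
  refine ⟨1, Nat.one_pos, fun x hx => ?_⟩
  exact AddSubgroup.subset_closure ⟨x, hx.1, 1, trivial, (mul_one x).symm⟩

end ARaux

open ARaux in
/-- The family of two-sided ideals with the right Artin-Rees property
satisfies (P₂): it is monoidal, and if `J` has the property and `I² ⊆ J ⊆ I` then `I`
has it.  Consequently, an ideal maximal with respect to not having the right
Artin-Rees property is prime. -/
theorem artin_rees_P2 :
    (∀ I J : Ideal R, IsTwoSided I → IsTwoSided J → HasRightAR I → HasRightAR J →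
      HasRightAR (I * J)) ∧
    (∀ I J : Ideal R, IsTwoSided I → IsTwoSided J → HasRightAR J →
      I * I ≤ J → J ≤ I → HasRightAR I) ∧
    (∀ P : Ideal R, IsTwoSided P → ¬ HasRightAR P →
      (∀ Q : Ideal R, IsTwoSided Q → P < Q → HasRightAR Q) → IsPrimeTwoSided P) := by
  have mono : ∀ (K : Submodule Rᵐᵒᵖ R) {I J : Ideal R}, I ≤ J →
      (AddSubgroup.closure (prodSet K I) : Set R) ⊆ AddSubgroup.closure (prodSet K J) :=
    fun K I J h => AddSubgroup.closure_mono (prodSet_mono h)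
  have part1 : ∀ I J : Ideal R, IsTwoSided I → IsTwoSided J → HasRightAR I → HasRightAR J →
      HasRightAR (I * J) := by
    intro I J hI hJ hARI hARJ K
    obtain ⟨m, hm, hKm⟩ := hARI K
    obtain ⟨n, hn, hKn⟩ := hARJ (rightSub K I hI)
    refine ⟨m + n, Nat.add_pos_left hm n, fun x hx => ?_⟩
    obtain ⟨hxK, hxP⟩ := hx
    -- (I*J)^(m+n) ≤ I^m and ≤ J^n
    have hIm : x ∈ (I ^ m : Ideal R) :=
      Ideal.pow_le_pow_right (Nat.le_add_right m n)
        (pow_mono (mul_le_left hI) (m + n) hxP)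
    have hJn : x ∈ (J ^ n : Ideal R) :=
      Ideal.pow_le_pow_right (Nat.le_add_left n m)
        (pow_mono (mul_le_right) (m + n) hxP)
    -- x ∈ KI (the right ideal)
    have hx1 : x ∈ rightSub K I hI := hKm ⟨hxK, hIm⟩
    -- x ∈ (KI)J
    have hx2 : x ∈ (AddSubgroup.closure (prodSet (rightSub K I hI) J) : Set R) :=
      hKn ⟨hx1, hJn⟩
    -- (KI)J ⊆ K(IJ)
    refine Set.Subset.trans ?_ (le_refl _) hx2
    intro z hz
    refine AddSubgroup.closure_induction (fun w hw => ?_) (AddSubgroup.zero_mem _)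
      (fun a b _ _ ha hb => AddSubgroup.add_mem _ ha hb)
      (fun a _ ha => AddSubgroup.neg_mem _ ha) hz
    obtain ⟨k', hk', j, hj, rfl⟩ := hw
    -- k' ∈ closure (prodSet K I); show k' * j ∈ closure (prodSet K (I*J))
    have hk'' : k' ∈ AddSubgroup.closure (prodSet K I) := hk'
    clear hk' hz
    induction hk'' using AddSubgroup.closure_induction with
    | mem w hw' =>
        obtain ⟨k, hk, i, hi, rfl⟩ := hw'
        exact AddSubgroup.subset_closure
          ⟨k, hk, i * j, Submodule.mul_mem_mul hi hj, mul_assoc _ _ _⟩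
    | zero => simpa using AddSubgroup.zero_mem _
    | add a b _ _ ha hb => rw [add_mul]; exact AddSubgroup.add_mem _ ha hb
    | neg a _ ha => rw [neg_mul]; exact AddSubgroup.neg_mem _ ha
  have part2 : ∀ I J : Ideal R, IsTwoSided I → IsTwoSided J → HasRightAR J →
      I * I ≤ J → J ≤ I → HasRightAR I := by
    intro I J _ _ hARJ h2 hJI K
    obtain ⟨n, hn, hKn⟩ := hARJ K
    refine ⟨2 * n, by omega, fun x hx => ?_⟩
    have hxJ : x ∈ (J ^ n : Ideal R) := pow_two_mul_le h2 n hx.2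
    exact mono K hJI (hKn ⟨hx.1, hxJ⟩)
  refine ⟨part1, part2, ?_⟩
  intro P hP hnAR hmax
  have hPtop : P ≠ ⊤ := by
    rintro rfl
    exact hnAR top_hasRightAR
  refine ⟨hP, hPtop, fun A B hA hB hAB => ?_⟩
  by_contra hcon
  push_neg at hcon
  obtain ⟨hAP, hBP⟩ := hcon
  set A' := A ⊔ P with hA'
  set B' := B ⊔ P with hB'
  have hA't : IsTwoSided A' := sup_isTwoSided hA hP
  have hB't : IsTwoSided B' := sup_isTwoSided hB hP
  have hPA' : P < A' := lt_of_le_of_ne le_sup_right (fun h => hAP (h ▸ le_sup_left))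
  have hPB' : P < B' := lt_of_le_of_ne le_sup_right (fun h => hBP (h ▸ le_sup_left))
  have hARA' := hmax A' hA't hPA'
  have hARB' := hmax B' hB't hPB'
  have hARJ : HasRightAR (A' * B') := part1 A' B' hA't hB't hARA' hARB'
  have hJP : A' * B' ≤ P := by
    refine Ideal.mul_le.2 fun a ha b hb => ?_
    obtain ⟨x, hx, p, hp, rfl⟩ := Submodule.mem_sup.1 ha
    obtain ⟨y, hy, q, hq, rfl⟩ := Submodule.mem_sup.1 hb
    have h1 : x * y ∈ P := hAB (Submodule.mul_mem_mul hx hy)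
    have h2 : x * q ∈ P := P.mul_mem_left x hq
    have h3 : p * y ∈ P := hP p hp y
    have h4 : p * q ∈ P := P.mul_mem_left p hq
    have : (x + p) * (y + q) = x * y + x * q + p * y + p * q := by noncomm_ring
    rw [this]
    exact add_mem (add_mem (add_mem h1 h2) h3) h4
  have hP2 : P * P ≤ A' * B' := mul_le_mul' le_sup_right le_sup_right
  exact hnAR (part2 P (A' * B') hP (mul_isTwoSided hB't) hARJ hP2 hJP)
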